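/- Let Ω = {ω_1, …, ω_12} and let 𝓑 consist of the four partitions of Ω: {{ω_1, ω_2, ω_3, ω_4, ω_9}, {ω_5, ω_10}, {ω_7, ω_11}, {ω_6, ω_8, ω_12}}; {{ω_4, ω_5, ω_6, ω_7, ω_12}, {ω_1, ω_8}, {ω_9, ω_11, ω_3}, {ω_2, ω_10}}; {{ω_7, ω_8, ω_9, ω_10, ω_3}, {ω_4, ω_11}, {ω_2, ω_6, ω_12}, {ω_1, ω_5}}; {{ω_10, ω_11, ω_12, ω_1, ω_6}, {ω_2, ω_7}, {ω_3, ω_5, ω_9}, {ω_4, ω_8}}. Then the incidence matrix of the collection 𝓔 of all blocks of all partitions in 𝓑 has rank strictly less than 12 over ℂ. -/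
import Mathlib
open scoped Matrix

lemma key11 (B : Finset (Fin 12)) :
    ∑ i : Fin 12, (if i ∈ B then (1:ℂ) else 0) *
      (if i = 2 then (-1:ℂ) else if i = 8 then 1 else 0)
    = (if (2:Fin 12) ∈ B then (-1:ℂ) else 0) + (if (8:Fin 12) ∈ B then (1:ℂ) else 0) := by
  have h : ∀ i : Fin 12, (if i ∈ B then (1:ℂ) else 0) *
      (if i = 2 then (-1:ℂ) else if i = 8 then 1 else 0)
      = (if i = 2 then (if i ∈ B then (-1:ℂ) else 0) else 0) +
        (if i = 8 then (if i ∈ B then (1:ℂ) else 0) else 0) := by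
    intro i
    by_cases h2 : i = 2 <;> by_cases h8 : i = 8 <;> simp_all <;> (try split) <;> ring
  rw [Finset.sum_congr rfl (fun i _ => h i), Finset.sum_add_distrib,
    Finset.sum_ite_eq' Finset.univ (2 : Fin 12), Finset.sum_ite_eq' Finset.univ (8 : Fin 12)]
  simp

/-- The incidence matrix of a finite collection `E` of subsets of `Ω` over a field `F`:
rows are indexed by `Ω`, columns by the members of `E`, with entry `1` if the row
element belongs to the column subset and `0` otherwise. -/
noncomputable def incidenceMatrix (F : Type*) [Field F] {Ω : Type*} [Fintype Ω]
    [DecidableEq Ω] (E : Finset (Finset Ω)) : Matrix Ω {B // B ∈ E} F :=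
  fun ω B => if ω ∈ B.1 then 1 else 0

/- Here `Ω = Fin 12`, with `ω_i` corresponding to `i - 1 : Fin 12`.
`𝓔` is the collection of all blocks of the four given partitions. -/
theorem stmt11 :
    (incidenceMatrix ℂ
      ((({{0,1,2,3,8},{4,9},{6,10},{5,7,11}} : Finset (Finset (Fin 12))) ∪
        {{3,4,5,6,11},{0,7},{8,10,2},{1,9}}) ∪
       (({{6,7,8,9,2},{3,10},{1,5,11},{0,4}} : Finset (Finset (Fin 12))) ∪
        {{9,10,11,0,5},{1,6},{2,4,8},{3,7}}))).rank < 12 := by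
  set E : Finset (Finset (Fin 12)) :=
      ((({{0,1,2,3,8},{4,9},{6,10},{5,7,11}} : Finset (Finset (Fin 12))) ∪
        {{3,4,5,6,11},{0,7},{8,10,2},{1,9}}) ∪
       (({{6,7,8,9,2},{3,10},{1,5,11},{0,4}} : Finset (Finset (Fin 12))) ∪
        {{9,10,11,0,5},{1,6},{2,4,8},{3,7}})) with hE
  set M := incidenceMatrix ℂ E with hM
  set v : Fin 12 → ℂ := fun i => if i = 2 then -1 else if i = 8 then 1 else 0 with hv
  have hker : Mᵀ.mulVecLin v = 0 := by
    rw [Matrix.mulVecLin_apply]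
    funext B
    have hmem : B.1 ∈ E := B.2
    have hsum : Mᵀ.mulVec v B =
        (if (2 : Fin 12) ∈ B.1 then (-1 : ℂ) else 0) +
        (if (8 : Fin 12) ∈ B.1 then (1 : ℂ) else 0) := by
      rw [← key11 B.1]
      simp [Matrix.mulVec, dotProduct, hM, incidenceMatrix, hv,
        Matrix.transpose_apply]
    simp only [hE, Finset.mem_union, Finset.mem_insert, Finset.mem_singleton] at hmem
    have h0 : Mᵀ.mulVec v B = 0 := by
      rw [hsum]
      rcases hmem with ((h|h|h|h)|(h|h|h|h))|((h|h|h|h)|(h|h|h|h)) <;> rw [h] <;>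
        simp +decide
    simpa using h0
  have hvne : v ≠ 0 := by
    intro h
    have := congrFun h 8
    simp [hv] at this
  have hpos : 0 < Module.finrank ℂ (LinearMap.ker Mᵀ.mulVecLin) := by
    rw [Module.finrank_pos_iff_exists_ne_zero]
    exact ⟨⟨v, LinearMap.mem_ker.mpr hker⟩, by simpa [Submodule.mk_eq_zero] using hvne⟩
  have hrk : Mᵀ.rank + Module.finrank ℂ (LinearMap.ker Mᵀ.mulVecLin) = 12 := by
    have := LinearMap.finrank_range_add_finrank_ker (Mᵀ.mulVecLin)
    simpa [Matrix.rank, Module.finrank_pi] using this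
  have ht : M.rank = Mᵀ.rank := (Matrix.rank_transpose M).symm
  omega
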